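/- For any η > 0, the maximum over α > -1/2 of the function F(α) = e^{-(α²/2 + α + 1/2) η²} · log(1 + e^{(α + 1/2) η²}) is comparable to e^{-η²/8} as η → ∞: there exist absolute constants 0 < c ≤ C and η₀ such that for all η ≥ η₀, c · e^{-η²/8} ≤ sup_{α > -1/2} F(α) ≤ C · e^{-η²/8}. -/
import Mathlib


open MeasureTheory Real Set

lemma stmt7_up (η α : ℝ) (hη : 1 ≤ η) (hα : -(1/2:ℝ) < α) :
    Real.exp (-(α ^ 2 / 2 + α + 1 / 2) * η ^ 2)
      * Real.log (1 + Real.exp ((α + 1 / 2) * η ^ 2)) ≤ 2 * Real.exp (-η ^ 2 / 8) := by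
  have hη0 : (0:ℝ) < η := lt_of_lt_of_le one_pos hη
  have hs : 0 < α + 1/2 := by linarith
  set t : ℝ := (α + 1/2) * η ^ 2 with htdef
  have ht : 0 ≤ t := by positivity
  have hsplit : Real.exp (-(α ^ 2 / 2 + α + 1 / 2) * η ^ 2)
      = Real.exp (-η ^ 2 / 8) * Real.exp (-((α + 1/2) ^ 2 * η ^ 2 / 2)) * Real.exp (-(t/2)) := by
    rw [← Real.exp_add, ← Real.exp_add]
    congr 1
    rw [htdef]; ring
  have hlog : Real.log (1 + Real.exp t) ≤ Real.log 2 + t := by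
    have h1 : (1:ℝ) ≤ Real.exp t := Real.one_le_exp ht
    have h2 : (1:ℝ) + Real.exp t ≤ 2 * Real.exp t := by linarith
    calc Real.log (1 + Real.exp t) ≤ Real.log (2 * Real.exp t) :=
          Real.log_le_log (by positivity) h2
      _ = Real.log 2 + t := by
          rw [Real.log_mul (by norm_num) (Real.exp_ne_zero t), Real.log_exp]
  have htexp : t * Real.exp (-(t/2)) ≤ 1 := by
    have hsq : Real.exp (t/4) * Real.exp (t/4) = Real.exp (t/2) := by
      rw [← Real.exp_add]; ring_nf
    have h4 := Real.add_one_le_exp (t/4)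
    have h5 : t ≤ Real.exp (t/2) := by nlinarith [sq_nonneg (t/4 - 1)]
    rw [Real.exp_neg, ← div_eq_mul_inv, div_le_one (Real.exp_pos _)]
    exact h5
  have hA : Real.exp (-((α + 1/2) ^ 2 * η ^ 2 / 2)) ≤ 1 := by
    rw [Real.exp_le_one_iff]
    have : 0 ≤ (α + 1/2) ^ 2 * η ^ 2 / 2 := by positivity
    linarith
  have hlog2 : Real.log 2 < 1 := by
    have := Real.log_two_lt_d9
    linarith
  have hEpos : (0:ℝ) < Real.exp (-(t/2)) := Real.exp_pos _
  have hLnn : 0 ≤ Real.log (1 + Real.exp t) :=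
    Real.log_nonneg (by linarith [Real.exp_pos t])
  have hB : Real.exp (-(t/2)) * Real.log (1 + Real.exp t) ≤ 2 := by
    have h6 : Real.exp (-(t/2)) * Real.log (1 + Real.exp t)
        ≤ Real.exp (-(t/2)) * (Real.log 2 + t) :=
      mul_le_mul_of_nonneg_left hlog hEpos.le
    have h7 : Real.exp (-(t/2)) ≤ 1 := by
      rw [Real.exp_le_one_iff]; linarith
    nlinarith
  rw [hsplit]
  have hE8 : (0:ℝ) < Real.exp (-η ^ 2 / 8) := Real.exp_pos _
  calc Real.exp (-η ^ 2 / 8) * Real.exp (-((α + 1/2) ^ 2 * η ^ 2 / 2)) * Real.exp (-(t/2))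
        * Real.log (1 + Real.exp t)
      = Real.exp (-η ^ 2 / 8) * (Real.exp (-((α + 1/2) ^ 2 * η ^ 2 / 2))
        * (Real.exp (-(t/2)) * Real.log (1 + Real.exp t))) := by ring
    _ ≤ Real.exp (-η ^ 2 / 8) * (1 * 2) := by
        apply mul_le_mul_of_nonneg_left _ hE8.le
        exact mul_le_mul hA hB (mul_nonneg hEpos.le hLnn) one_pos.le
    _ = 2 * Real.exp (-η ^ 2 / 8) := by ring

lemma stmt7_lo (η : ℝ) (hη : 1 ≤ η) :
    Real.exp (-1) * Real.exp (-η ^ 2 / 8)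
      ≤ Real.exp (-((1/η^2 - 1/2) ^ 2 / 2 + (1/η^2 - 1/2) + 1 / 2) * η ^ 2)
        * Real.log (1 + Real.exp (((1/η^2 - 1/2) + 1 / 2) * η ^ 2)) := by
  have hη0 : (0:ℝ) < η := lt_of_lt_of_le one_pos hη
  have hη2 : (0:ℝ) < η ^ 2 := by positivity
  have hη2' : (1:ℝ) ≤ η ^ 2 := by nlinarith
  have harg : ((1/η^2 - 1/2) + 1 / 2) * η ^ 2 = 1 := by field_simp; ring
  have hexparg : -((1/η^2 - 1/2) ^ 2 / 2 + (1/η^2 - 1/2) + 1 / 2) * η ^ 2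
      = -(1/(2*η^2) + 1/2 + η^2/8) := by field_simp; ring_nf
  have hge : -1 + -η ^ 2 / 8 ≤ -((1/η^2 - 1/2) ^ 2 / 2 + (1/η^2 - 1/2) + 1 / 2) * η ^ 2 := by
    rw [hexparg]
    have : 1/(2*η^2) ≤ 1/2 := by
      rw [div_le_div_iff₀ (by positivity) (by norm_num)]; linarith
    linarith
  have hlogge : (1:ℝ) ≤ Real.log (1 + Real.exp (((1/η^2 - 1/2) + 1 / 2) * η ^ 2)) := by
    rw [harg]
    have h1 : Real.exp 1 ≤ 1 + Real.exp 1 := by linarith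
    calc (1:ℝ) = Real.log (Real.exp 1) := (Real.log_exp 1).symm
      _ ≤ Real.log (1 + Real.exp 1) := Real.log_le_log (Real.exp_pos 1) h1
  calc Real.exp (-1) * Real.exp (-η ^ 2 / 8)
      = Real.exp (-1 + -η ^ 2 / 8) * 1 := by rw [← Real.exp_add]; ring
    _ ≤ Real.exp (-((1/η^2 - 1/2) ^ 2 / 2 + (1/η^2 - 1/2) + 1 / 2) * η ^ 2)
        * Real.log (1 + Real.exp (((1/η^2 - 1/2) + 1 / 2) * η ^ 2)) :=
        mul_le_mul (Real.exp_le_exp.mpr hge) hlogge one_pos.le (Real.exp_pos _).le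

theorem stmt7 : ∃ c C η₀ : ℝ, 0 < c ∧ c ≤ C ∧ ∀ η : ℝ, η₀ ≤ η →
    c * Real.exp (-η ^ 2 / 8)
      ≤ sSup ((fun α : ℝ => Real.exp (-(α ^ 2 / 2 + α + 1 / 2) * η ^ 2)
          * Real.log (1 + Real.exp ((α + 1 / 2) * η ^ 2))) '' Set.Ioi (-(1 / 2) : ℝ)) ∧
    sSup ((fun α : ℝ => Real.exp (-(α ^ 2 / 2 + α + 1 / 2) * η ^ 2)
          * Real.log (1 + Real.exp ((α + 1 / 2) * η ^ 2))) '' Set.Ioi (-(1 / 2) : ℝ))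
      ≤ C * Real.exp (-η ^ 2 / 8) := by
  refine ⟨Real.exp (-1), 2, 1, Real.exp_pos _, ?_, ?_⟩
  · have h1 : Real.exp (-1 : ℝ) ≤ 1 := Real.exp_le_one_iff.mpr (by norm_num)
    linarith
  intro η hη
  have hη0 : (0:ℝ) < η := lt_of_lt_of_le one_pos hη
  have hη2 : (0:ℝ) < η ^ 2 := by positivity
  set S := ((fun α : ℝ => Real.exp (-(α ^ 2 / 2 + α + 1 / 2) * η ^ 2)
          * Real.log (1 + Real.exp ((α + 1 / 2) * η ^ 2))) '' Set.Ioi (-(1 / 2) : ℝ)) with hS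
  have hbdd : BddAbove S := by
    refine ⟨2 * Real.exp (-η ^ 2 / 8), ?_⟩
    rintro x ⟨α, hα, rfl⟩
    exact stmt7_up η α hη hα
  have hmem : (1/η^2 - 1/2 : ℝ) ∈ Set.Ioi (-(1/2) : ℝ) := by
    simp only [Set.mem_Ioi]
    have : 0 < 1/η^2 := by positivity
    linarith
  have hne : S.Nonempty := ⟨_, Set.mem_image_of_mem _ hmem⟩
  constructor
  · calc Real.exp (-1) * Real.exp (-η ^ 2 / 8)
        ≤ Real.exp (-((1/η^2 - 1/2) ^ 2 / 2 + (1/η^2 - 1/2) + 1 / 2) * η ^ 2)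
          * Real.log (1 + Real.exp (((1/η^2 - 1/2) + 1 / 2) * η ^ 2)) := stmt7_lo η hη
      _ ≤ sSup S := le_csSup hbdd (Set.mem_image_of_mem _ hmem)
  · refine csSup_le hne ?_
    rintro x ⟨α, hα, rfl⟩
    exact stmt7_up η α hη hα
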